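/- Let S = diag(s₁,s₂,s₃) with s₁ ≥ s₂ ≥ |s₃| ≥ 0, let dᵢ(S) be the diagonal entries of the first moment of the matrix Fisher distribution M(S), and set D = diag(d₁(S),d₂(S),d₃(S)). Then tr(D)·I − D is positive definite if and only if tr(S)·I − S is positive definite; equivalently, dᵢ(S) + dⱼ(S) > 0 for all pairs of distinct indices i, j if and only if sᵢ + sⱼ > 0 for all pairs of distinct indices i, j. -/

import Mathlib

open MeasureTheory Matrix

noncomputable section

/-- The space of real `3 × 3` matrices. -/
abbrev M3 := Matrix (Fin 3) (Fin 3) ℝ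

instance : MeasurableSpace M3 := (inferInstance : MeasurableSpace (Fin 3 → Fin 3 → ℝ))

/-- The special orthogonal group `SO(3)`: real `3 × 3` matrices `R` with
`Rᵀ R = 1` and `det R = 1`. -/
def SO3 : Set M3 := {R | Rᵀ * R = 1 ∧ R.det = 1}

/-- `μ` is the Haar probability measure of the compact group `SO(3)`, viewed as a measure
on the ambient space of `3 × 3` matrices: it is a probability measure carried by `SO3`
which is invariant under left and right translation by elements of `SO3`. -/
structure IsHaarSO3 (μ : Measure M3) : Prop where
  prob : IsProbabilityMeasure μ
  carried : μ SO3ᶜ = 0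
  map_left : ∀ U ∈ SO3, Measure.map (fun R => U * R) μ = μ
  map_right : ∀ V ∈ SO3, Measure.map (fun R => R * V) μ = μ

/-- The normalizing constant `c(S)` of the matrix Fisher distribution with diagonal
parameter `S = diag s`. -/
def cS (μ : Measure M3) (s : Fin 3 → ℝ) : ℝ :=
  ∫ Q, Real.exp ((Matrix.diagonal s * Q).trace) ∂μ

/-- The matrix Fisher density `p_S(Q) = exp(tr(S Q)) / c(S)` with diagonal parameter
`S = diag s`. -/
def pS (μ : Measure M3) (s : Fin 3 → ℝ) (Q : M3) : ℝ :=
  Real.exp ((Matrix.diagonal s * Q).trace) / cS μ s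

/-- `dᵢ(S)`: the `i`-th diagonal entry of the first moment `E[Q]` of the matrix Fisher
distribution `M(S)` with `S = diag s`. -/
def dS (μ : Measure M3) (s : Fin 3 → ℝ) (i : Fin 3) : ℝ :=
  ∫ Q, Q i i * pS μ s Q ∂μ

lemma measurable_entry (a b : Fin 3) : Measurable fun Q : M3 => Q a b :=
  (measurable_pi_apply b).comp (measurable_pi_apply a)

lemma measurable_mulL (U : M3) : Measurable fun Q : M3 => U * Q := by
  apply measurable_pi_lambda
  intro i
  apply measurable_pi_lambda
  intro j
  have : (fun Q : M3 => (U * Q) i j)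
      = fun Q : M3 => U i 0 * Q 0 j + U i 1 * Q 1 j + U i 2 * Q 2 j := by
    funext Q; simp [Matrix.mul_apply, Fin.sum_univ_three]
  show Measurable fun Q : M3 => (U * Q) i j
  rw [this]
  exact (((measurable_entry 0 j).const_mul _).add ((measurable_entry 1 j).const_mul _)).add
    ((measurable_entry 2 j).const_mul _)

lemma measurable_mulR (V : M3) : Measurable fun Q : M3 => Q * V := by
  apply measurable_pi_lambda
  intro i
  apply measurable_pi_lambda
  intro j
  have : (fun Q : M3 => (Q * V) i j)
      = fun Q : M3 => Q i 0 * V 0 j + Q i 1 * V 1 j + Q i 2 * V 2 j := by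
    funext Q; simp [Matrix.mul_apply, Fin.sum_univ_three]
  show Measurable fun Q : M3 => (Q * V) i j
  rw [this]
  exact (((measurable_entry i 0).mul_const _).add ((measurable_entry i 1).mul_const _)).add
    ((measurable_entry i 2).mul_const _)

lemma SO3.mul_mem {A B : M3} (hA : A ∈ SO3) (hB : B ∈ SO3) : A * B ∈ SO3 := by
  refine ⟨?_, ?_⟩
  · rw [Matrix.transpose_mul]
    calc Bᵀ * Aᵀ * (A * B) = Bᵀ * ((Aᵀ * A) * B) := by rw [mul_assoc, mul_assoc]
      _ = 1 := by rw [hA.1, one_mul, hB.1]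
  · rw [Matrix.det_mul, hA.2, hB.2, mul_one]

lemma SO3.transpose_mem {A : M3} (hA : A ∈ SO3) : Aᵀ ∈ SO3 := by
  have h : A * Aᵀ = 1 := by
    exact mul_eq_one_comm.mp hA.1
  exact ⟨by rw [Matrix.transpose_transpose]; exact h, by rw [Matrix.det_transpose]; exact hA.2⟩

lemma entry_abs_le {Q : M3} (hQ : Q ∈ SO3) (a b : Fin 3) : |Q a b| ≤ 1 := by
  have h := congrArg (fun M : M3 => M b b) hQ.1
  simp only [Matrix.mul_apply, Matrix.transpose_apply, Fin.sum_univ_three,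
    Matrix.one_apply_eq] at h
  have key : ∀ x y z : ℝ, x * x + y * y + z * z = 1 → |x| ≤ 1 := by
    intro x y z hxyz
    rw [abs_le]
    constructor <;> nlinarith [sq_nonneg (x + 1), sq_nonneg (x - 1)]
  fin_cases a
  · exact key _ (Q 1 b) (Q 2 b) h
  · show |Q 1 b| ≤ 1
    exact key _ (Q 0 b) (Q 2 b) (by linarith)
  · show |Q 2 b| ≤ 1
    exact key _ (Q 0 b) (Q 1 b) (by linarith)

lemma ae_SO3 {μ : Measure M3} (hμ : IsHaarSO3 μ) : ∀ᵐ Q ∂μ, Q ∈ SO3 := by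
  rw [ae_iff]
  exact hμ.carried

lemma integrable_of_boundedSO3 {μ : Measure M3} (hμ : IsHaarSO3 μ) {F : M3 → ℝ}
    (hF : Measurable F) {C : ℝ} (hC : ∀ Q ∈ SO3, |F Q| ≤ C) : Integrable F μ := by
  haveI := hμ.prob
  refine Integrable.mono' (integrable_const C) hF.aestronglyMeasurable ?_
  filter_upwards [ae_SO3 hμ] with Q hQ
  simpa [Real.norm_eq_abs] using hC Q hQ

lemma integral_comp_mulL {μ : Measure M3} (hμ : IsHaarSO3 μ) {U : M3} (hU : U ∈ SO3)
    {F : M3 → ℝ} (hF : Measurable F) : ∫ Q, F (U * Q) ∂μ = ∫ Q, F Q ∂μ := by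
  conv_rhs => rw [← hμ.map_left U hU]
  rw [integral_map (measurable_mulL U).aemeasurable hF.aestronglyMeasurable]

lemma integral_comp_mulR {μ : Measure M3} (hμ : IsHaarSO3 μ) {V : M3} (hV : V ∈ SO3)
    {F : M3 → ℝ} (hF : Measurable F) : ∫ Q, F (Q * V) ∂μ = ∫ Q, F Q ∂μ := by
  conv_rhs => rw [← hμ.map_right V hV]
  rw [integral_map (measurable_mulR V).aemeasurable hF.aestronglyMeasurable]

lemma integral_comp_conj {μ : Measure M3} (hμ : IsHaarSO3 μ) {U : M3} (hU : U ∈ SO3)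
    {F : M3 → ℝ} (hF : Measurable F) : ∫ Q, F (U * Q * Uᵀ) ∂μ = ∫ Q, F Q ∂μ := by
  have h1 : ∫ Q, F (U * Q * Uᵀ) ∂μ = ∫ Q, F (U * Q) ∂μ := by
    have := integral_comp_mulR hμ (SO3.transpose_mem hU)
      (F := fun R => F (U * R)) (hF.comp (measurable_mulL U))
    simpa [mul_assoc] using this
  rw [h1, integral_comp_mulL hμ hU hF]

lemma ae_comp_mulL {μ : Measure M3} (hμ : IsHaarSO3 μ) {W : M3} (hW : W ∈ SO3)
    {p : M3 → Prop} (hp : MeasurableSet {Q : M3 | p Q}) (h : ∀ᵐ Q ∂μ, p Q) :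
    ∀ᵐ Q ∂μ, p (W * Q) := by
  rw [← hμ.map_left W hW] at h
  exact (ae_map_iff (measurable_mulL W).aemeasurable hp).mp h

lemma bracket_props {a b : ℝ} (hab : 0 < a + b) (x y : ℝ) :
    0 ≤ (x + y) * (Real.exp (a*x+b*y) + Real.exp (a*y+b*x)
        - Real.exp (-(a*x+b*y)) - Real.exp (-(a*y+b*x))) ∧
    (x + y ≠ 0 → 0 < (x + y) * (Real.exp (a*x+b*y) + Real.exp (a*y+b*x)
        - Real.exp (-(a*x+b*y)) - Real.exp (-(a*y+b*x)))) := by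
  rcases lt_trichotomy 0 (x + y) with h | h | h
  · have p1 : Real.exp (-(a*y+b*x)) < Real.exp (a*x+b*y) :=
      Real.exp_lt_exp.mpr (by nlinarith [mul_pos hab h])
    have p2 : Real.exp (-(a*x+b*y)) < Real.exp (a*y+b*x) :=
      Real.exp_lt_exp.mpr (by nlinarith [mul_pos hab h])
    exact ⟨(mul_pos h (by linarith)).le, fun _ => mul_pos h (by linarith)⟩
  · exact ⟨by rw [← h, zero_mul], fun hxy => absurd h.symm hxy⟩
  · have p1 : Real.exp (a*x+b*y) < Real.exp (-(a*y+b*x)) :=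
      Real.exp_lt_exp.mpr (by nlinarith [mul_neg_of_pos_of_neg hab h])
    have p2 : Real.exp (a*y+b*x) < Real.exp (-(a*x+b*y)) :=
      Real.exp_lt_exp.mpr (by nlinarith [mul_neg_of_pos_of_neg hab h])
    exact ⟨mul_nonneg_of_nonpos_of_nonpos h.le (by linarith),
      fun _ => mul_pos_of_neg_of_neg h (by linarith)⟩

def fF (s : Fin 3 → ℝ) (i j k : Fin 3) : M3 → ℝ :=
  fun Q => (Q i i + Q j j) * Real.exp (s i * Q i i + s j * Q j j + s k * Q k k)

def gF (s : Fin 3 → ℝ) (i j k : Fin 3) : M3 → ℝ :=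
  fun Q => ((Q i i + Q j j) * (Real.exp (s i * Q i i + s j * Q j j)
      + Real.exp (s i * Q j j + s j * Q i i)
      - Real.exp (-(s i * Q i i + s j * Q j j))
      - Real.exp (-(s i * Q j j + s j * Q i i)))) * Real.exp (s k * Q k k)

lemma measurable_expLin (s : Fin 3 → ℝ) (i j k : Fin 3) :
    Measurable fun Q : M3 => Real.exp (s i * Q i i + s j * Q j j + s k * Q k k) :=
  Real.measurable_exp.comp ((((measurable_entry i i).const_mul (s i)).add
    ((measurable_entry j j).const_mul (s j))).add ((measurable_entry k k).const_mul (s k)))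

lemma expLin_bound (s : Fin 3 → ℝ) (i j k : Fin 3) {Q : M3} (hQ : Q ∈ SO3) :
    Real.exp (s i * Q i i + s j * Q j j + s k * Q k k)
      ≤ Real.exp (|s i| + |s j| + |s k|) := by
  apply Real.exp_le_exp.mpr
  have key : ∀ (c x : ℝ), |x| ≤ 1 → c * x ≤ |c| := by
    intro c x hx
    calc c * x ≤ |c * x| := le_abs_self _
      _ = |c| * |x| := abs_mul _ _
      _ ≤ |c| * 1 := mul_le_mul_of_nonneg_left hx (abs_nonneg c)
      _ = |c| := mul_one _
  have h1 := key (s i) _ (entry_abs_le hQ i i)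
  have h2 := key (s j) _ (entry_abs_le hQ j j)
  have h3 := key (s k) _ (entry_abs_le hQ k k)
  linarith

lemma measurable_fF (s : Fin 3 → ℝ) (i j k : Fin 3) : Measurable (fF s i j k) :=
  ((measurable_entry i i).add (measurable_entry j j)).mul (measurable_expLin s i j k)

lemma fF_bound (s : Fin 3 → ℝ) (i j k : Fin 3) {Q : M3} (hQ : Q ∈ SO3) :
    |fF s i j k Q| ≤ 2 * Real.exp (|s i| + |s j| + |s k|) := by
  have h1 := entry_abs_le hQ i i
  have h2 := entry_abs_le hQ j j
  have hE := expLin_bound s i j k hQ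
  have hEpos := Real.exp_pos (s i * Q i i + s j * Q j j + s k * Q k k)
  rw [fF, abs_mul, abs_of_pos hEpos]
  have habs : |Q i i + Q j j| ≤ 2 := (abs_add_le _ _).trans (by linarith)
  nlinarith [abs_nonneg (Q i i + Q j j), hEpos.le]

lemma integrable_fF_comp {μ : Measure M3} (hμ : IsHaarSO3 μ) (s : Fin 3 → ℝ) (i j k : Fin 3)
    {T : M3 → M3} (mT : Measurable T) (hT : ∀ Q ∈ SO3, T Q ∈ SO3) :
    Integrable (fun Q => fF s i j k (T Q)) μ :=
  integrable_of_boundedSO3 hμ ((measurable_fF s i j k).comp mT)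
    (fun Q hQ => fF_bound s i j k (hT Q hQ))

lemma integrable_fF {μ : Measure M3} (hμ : IsHaarSO3 μ) (s : Fin 3 → ℝ) (i j k : Fin 3) :
    Integrable (fF s i j k) μ :=
  integrable_of_boundedSO3 hμ (measurable_fF s i j k) (fun Q hQ => fF_bound s i j k hQ)

lemma master {μ : Measure M3} (hμ : IsHaarSO3 μ) (s : Fin 3 → ℝ) (i j k : Fin 3)
    (htr : ∀ Q : M3, (Matrix.diagonal s * Q).trace = s i * Q i i + s j * Q j j + s k * Q k k)
    (hsum : ∀ Q : M3, Q ∈ SO3 → Q i i ^ 2 + Q j i ^ 2 + Q k i ^ 2 = 1)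
    {D U R1 R2 R3 R4 : M3}
    (hD : D ∈ SO3) (hU : U ∈ SO3) (hR1 : R1 ∈ SO3) (hR2 : R2 ∈ SO3)
    (hR3 : R3 ∈ SO3) (hR4 : R4 ∈ SO3)
    (hDact : ∀ Q : M3, (D * Q) i i = -Q i i ∧ (D * Q) j j = -Q j j ∧ (D * Q) k k = Q k k)
    (hUact : ∀ Q : M3,
      (U * Q * Uᵀ) i i = Q j j ∧ (U * Q * Uᵀ) j j = Q i i ∧ (U * Q * Uᵀ) k k = Q k k)
    (hR1act : ∀ Q : M3, (R1 * Q) i i = -Q i i ∧ (R1 * Q) j j = Q j j)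
    (hR2act : ∀ Q : M3, (R2 * Q) i i = Q j i ∧ (R2 * Q) j j = -(Q i j))
    (hR3act : ∀ Q : M3, (R3 * Q) i i = Q j i ∧ (R3 * Q) j j = Q i j)
    (hR4act : ∀ Q : M3, (R4 * Q) i i = Q k i ∧ (R4 * Q) j j = Q j j) :
    (0 < s i + s j → 0 < dS μ s i + dS μ s j) ∧
    (s i + s j = 0 → dS μ s i + dS μ s j = 0) := by
  haveI := hμ.prob
  haveI : NeZero μ := ⟨hμ.prob.ne_zero⟩
  -- integrability of the pieces
  have intf : Integrable (fF s i j k) μ := integrable_fF hμ s i j k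
  have intf2 : Integrable (fun Q => fF s i j k (D * Q)) μ :=
    integrable_fF_comp hμ s i j k (measurable_mulL D) (fun Q hQ => SO3.mul_mem hD hQ)
  have intf3 : Integrable (fun Q => fF s i j k (U * Q * Uᵀ)) μ :=
    integrable_fF_comp hμ s i j k ((measurable_mulR Uᵀ).comp (measurable_mulL U))
      (fun Q hQ => SO3.mul_mem (SO3.mul_mem hU hQ) (SO3.transpose_mem hU))
  have intf4 : Integrable (fun Q => fF s i j k (D * (U * Q * Uᵀ))) μ :=
    integrable_fF_comp hμ s i j k
      ((measurable_mulL D).comp ((measurable_mulR Uᵀ).comp (measurable_mulL U)))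
      (fun Q hQ => SO3.mul_mem hD (SO3.mul_mem (SO3.mul_mem hU hQ) (SO3.transpose_mem hU)))
  -- positivity of the normalizing constant
  have intE : Integrable (fun Q => Real.exp (s i * Q i i + s j * Q j j + s k * Q k k)) μ :=
    integrable_of_boundedSO3 hμ (measurable_expLin s i j k) (C := Real.exp (|s i| + |s j| + |s k|))
      (fun Q hQ => by
        rw [abs_of_pos (Real.exp_pos _)]; exact expLin_bound s i j k hQ)
  have hc : 0 < cS μ s := by
    have hre : (fun Q : M3 => Real.exp ((Matrix.diagonal s * Q).trace))
        = fun Q => Real.exp (s i * Q i i + s j * Q j j + s k * Q k k) := by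
      funext Q; rw [htr]
    unfold cS
    rw [hre]
    exact integral_exp_pos intE

  -- integrability of the entry integrands
  have intxE : Integrable (fun Q => Q i i * Real.exp (s i * Q i i + s j * Q j j + s k * Q k k)) μ :=
    integrable_of_boundedSO3 hμ ((measurable_entry i i).mul (measurable_expLin s i j k))
      (C := Real.exp (|s i| + |s j| + |s k|))
      (fun Q hQ => by
        rw [abs_mul, abs_of_pos (Real.exp_pos _)]
        have h1 := entry_abs_le hQ i i
        have h2 := expLin_bound s i j k hQ
        nlinarith [abs_nonneg (Q i i), (Real.exp_pos (s i * Q i i + s j * Q j j + s k * Q k k)).le])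
  have intyE : Integrable (fun Q => Q j j * Real.exp (s i * Q i i + s j * Q j j + s k * Q k k)) μ :=
    integrable_of_boundedSO3 hμ ((measurable_entry j j).mul (measurable_expLin s i j k))
      (C := Real.exp (|s i| + |s j| + |s k|))
      (fun Q hQ => by
        rw [abs_mul, abs_of_pos (Real.exp_pos _)]
        have h1 := entry_abs_le hQ j j
        have h2 := expLin_bound s i j k hQ
        nlinarith [abs_nonneg (Q j j), (Real.exp_pos (s i * Q i i + s j * Q j j + s k * Q k k)).le])
  -- d i + d j = (∫ f)/c
  have hdrep : dS μ s i + dS μ s j = (∫ Q, fF s i j k Q ∂μ) / cS μ s := by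
    have h1 : dS μ s i
        = (∫ Q, Q i i * Real.exp (s i * Q i i + s j * Q j j + s k * Q k k) ∂μ) / cS μ s := by
      simp only [dS, pS]
      rw [← integral_div]
      congr 1
      funext Q
      rw [htr]
      ring
    have h2 : dS μ s j
        = (∫ Q, Q j j * Real.exp (s i * Q i i + s j * Q j j + s k * Q k k) ∂μ) / cS μ s := by
      simp only [dS, pS]
      rw [← integral_div]
      congr 1
      funext Q
      rw [htr]
      ring
    rw [h1, h2, ← add_div, ← integral_add intxE intyE]
    have hfeq : (fun Q : M3 => Q i i * Real.exp (s i * Q i i + s j * Q j j + s k * Q k k)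
        + Q j j * Real.exp (s i * Q i i + s j * Q j j + s k * Q k k)) = fF s i j k := by
      funext Q
      simp only [fF]
      ring
    rw [hfeq]
  -- invariance of the four integrals
  have hI2 : ∫ Q, fF s i j k (D * Q) ∂μ = ∫ Q, fF s i j k Q ∂μ :=
    integral_comp_mulL hμ hD (measurable_fF s i j k)
  have hI3 : ∫ Q, fF s i j k (U * Q * Uᵀ) ∂μ = ∫ Q, fF s i j k Q ∂μ :=
    integral_comp_conj hμ hU (measurable_fF s i j k)
  have hI4 : ∫ Q, fF s i j k (D * (U * Q * Uᵀ)) ∂μ = ∫ Q, fF s i j k Q ∂μ := by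
    have h := integral_comp_conj hμ hU (F := fun R => fF s i j k (D * R))
      ((measurable_fF s i j k).comp (measurable_mulL D))
    rw [h, integral_comp_mulL hμ hD (measurable_fF s i j k)]
  -- the pointwise symmetrization identity
  have ident : ∀ Q : M3, fF s i j k Q + fF s i j k (D * Q) + fF s i j k (U * Q * Uᵀ)
      + fF s i j k (D * (U * Q * Uᵀ)) = gF s i j k Q := by
    intro Q
    obtain ⟨d1, d2, d3⟩ := hDact Q
    obtain ⟨u1, u2, u3⟩ := hUact Q
    obtain ⟨e1, e2, e3⟩ := hDact (U * Q * Uᵀ)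
    simp only [fF, gF]
    rw [d1, d2, d3, e1, e2, e3, u1, u2, u3]
    rw [show s i * Q i i + s j * Q j j + s k * Q k k
        = (s i * Q i i + s j * Q j j) + s k * Q k k from by ring]
    rw [show s i * -Q i i + s j * -Q j j + s k * Q k k
        = (-(s i * Q i i + s j * Q j j)) + s k * Q k k from by ring]
    rw [show s i * Q j j + s j * Q i i + s k * Q k k
        = (s i * Q j j + s j * Q i i) + s k * Q k k from by ring]
    rw [show s i * -Q j j + s j * -Q i i + s k * Q k k
        = (-(s i * Q j j + s j * Q i i)) + s k * Q k k from by ring]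
    simp only [Real.exp_add]
    ring
  -- the symmetrized integral
  have intf12 : Integrable (fun Q => fF s i j k Q + fF s i j k (D * Q)) μ := intf.add intf2
  have intf123 : Integrable (fun Q => fF s i j k Q + fF s i j k (D * Q)
      + fF s i j k (U * Q * Uᵀ)) μ := intf12.add intf3
  have intsum : Integrable (fun Q => fF s i j k Q + fF s i j k (D * Q)
      + fF s i j k (U * Q * Uᵀ) + fF s i j k (D * (U * Q * Uᵀ))) μ := intf123.add intf4
  have intg : Integrable (gF s i j k) μ :=
    intsum.congr (Filter.Eventually.of_forall ident)
  have hIg : ∫ Q, fF s i j k Q ∂μ = (∫ Q, gF s i j k Q ∂μ) / 4 := by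
    have hsum4 : ∫ Q, gF s i j k Q ∂μ = 4 * ∫ Q, fF s i j k Q ∂μ := by
      calc ∫ Q, gF s i j k Q ∂μ
          = ∫ Q, (fF s i j k Q + fF s i j k (D * Q) + fF s i j k (U * Q * Uᵀ)
              + fF s i j k (D * (U * Q * Uᵀ))) ∂μ := by
            congr 1
            funext Q
            exact (ident Q).symm
        _ = (∫ Q, (fF s i j k Q + fF s i j k (D * Q) + fF s i j k (U * Q * Uᵀ)) ∂μ)
              + ∫ Q, fF s i j k (D * (U * Q * Uᵀ)) ∂μ := integral_add intf123 intf4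
        _ = ((∫ Q, (fF s i j k Q + fF s i j k (D * Q)) ∂μ)
              + ∫ Q, fF s i j k (U * Q * Uᵀ) ∂μ) + ∫ Q, fF s i j k (D * (U * Q * Uᵀ)) ∂μ := by
            rw [integral_add intf12 intf3]
        _ = 4 * ∫ Q, fF s i j k Q ∂μ := by
            rw [integral_add intf intf2, hI2, hI3, hI4]
            ring
    linarith
  constructor
  · -- positive case
    intro hpos
    have hg_nonneg : ∀ Q : M3, 0 ≤ gF s i j k Q := by
      intro Q
      simp only [gF]
      exact mul_nonneg (bracket_props hpos (Q i i) (Q j j)).1 (Real.exp_pos _).le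
    have hg_pos : ∀ Q : M3, Q i i + Q j j ≠ 0 → 0 < gF s i j k Q := by
      intro Q hQ
      simp only [gF]
      exact mul_pos ((bracket_props hpos (Q i i) (Q j j)).2 hQ) (Real.exp_pos _)
    have hposint : 0 < ∫ Q, gF s i j k Q ∂μ := by
      rw [integral_pos_iff_support_of_nonneg hg_nonneg intg]
      by_contra hcon
      push_neg at hcon
      have hsup0 : μ (Function.support (gF s i j k)) = 0 := le_antisymm hcon bot_le
      have hae0 : ∀ᵐ Q ∂μ, Q i i + Q j j = 0 := by
        rw [ae_iff]
        refine measure_mono_null ?_ hsup0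
        intro Q hQ
        exact Function.mem_support.mpr (ne_of_gt (hg_pos Q hQ))
      have mset : MeasurableSet {Q : M3 | Q i i + Q j j = 0} :=
        ((measurable_entry i i).add (measurable_entry j j)) (measurableSet_singleton 0)
      have a1 := ae_comp_mulL hμ hR1 mset hae0
      have a2 := ae_comp_mulL hμ hR2 mset hae0
      have a3 := ae_comp_mulL hμ hR3 mset hae0
      have a4 := ae_comp_mulL hμ hR4 mset hae0
      haveI : (MeasureTheory.ae μ).NeBot := ae_neBot.mpr (NeZero.ne μ)
      obtain ⟨Q, ⟨⟨⟨⟨⟨hQ, h0⟩, h1'⟩, h2'⟩, h3'⟩, h4'⟩⟩ :=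
        ((((((ae_SO3 hμ).and hae0).and a1).and a2).and a3).and a4).exists
      rw [(hR1act Q).1, (hR1act Q).2] at h1'
      rw [(hR2act Q).1, (hR2act Q).2] at h2'
      rw [(hR3act Q).1, (hR3act Q).2] at h3'
      rw [(hR4act Q).1, (hR4act Q).2] at h4'
      have hs := hsum Q hQ
      have hx : Q i i = 0 := by linarith
      have hji : Q j i = 0 := by linarith
      have hki : Q k i = 0 := by linarith
      rw [hx, hji, hki] at hs
      norm_num at hs
    rw [hdrep, hIg]
    exact div_pos (by linarith) hc
  · -- degenerate case
    intro h0
    have hg0 : ∀ Q : M3, gF s i j k Q = 0 := by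
      intro Q
      have hb : s j = -s i := by linarith
      simp only [gF, hb]
      rw [show s i * Q i i + -s i * Q j j = -(s i * Q j j + -s i * Q i i) from by ring]
      rw [neg_neg]
      ring
    have hzint : ∫ Q, gF s i j k Q ∂μ = 0 := by
      simp only [hg0, integral_zero]
    rw [hdrep, hIg, hzint]
    norm_num

lemma trace_diag (s : Fin 3 → ℝ) (Q : M3) :
    (Matrix.diagonal s * Q).trace = s 0 * Q 0 0 + s 1 * Q 1 1 + s 2 * Q 2 2 := by
  simp [Matrix.trace, Matrix.diagonal_mul, Fin.sum_univ_three, Matrix.diag]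

lemma col_norm {Q : M3} (hQ : Q ∈ SO3) (b : Fin 3) :
    Q 0 b ^ 2 + Q 1 b ^ 2 + Q 2 b ^ 2 = 1 := by
  have h := congrArg (fun M : M3 => M b b) hQ.1
  simp only [Matrix.mul_apply, Matrix.transpose_apply, Fin.sum_univ_three,
    Matrix.one_apply_eq] at h
  linear_combination h


lemma key01 {μ : Measure M3} (hμ : IsHaarSO3 μ) (s : Fin 3 → ℝ) :
    (0 < s 0 + s 1 → 0 < dS μ s 0 + dS μ s 1) ∧
    (s 0 + s 1 = 0 → dS μ s 0 + dS μ s 1 = 0) := by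
  refine master hμ s 0 1 2 ?_ ?_
    (D := !![(-1:ℝ),0,0;0,-1,0;0,0,1]) (U := !![(0:ℝ),1,0;1,0,0;0,0,-1])
    (R1 := !![(-1:ℝ),0,0;0,1,0;0,0,-1]) (R2 := !![(0:ℝ),1,0;-1,0,0;0,0,1])
    (R3 := !![(0:ℝ),1,0;1,0,0;0,0,-1]) (R4 := !![(0:ℝ),0,1;0,1,0;-1,0,0])
    ?_ ?_ ?_ ?_ ?_ ?_ ?_ ?_ ?_ ?_ ?_ ?_
  · intro Q; rw [trace_diag]
  · intro Q hQ; linarith [col_norm hQ 0]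
  all_goals first
    | (show _ ∧ _
       constructor
       · ext i j
         fin_cases i <;> fin_cases j <;>
           simp [Matrix.mul_apply, Fin.sum_univ_succ, Matrix.one_apply]
       · simp [Matrix.det_fin_three])
    | (intro Q
       refine ⟨?_, ?_, ?_⟩ <;>
         simp [Matrix.mul_apply, Matrix.transpose, Matrix.of_apply, Fin.sum_univ_succ,
           Matrix.vecMul, dotProduct, Matrix.vecHead, Matrix.vecTail])
    | (intro Q
       refine ⟨?_, ?_⟩ <;>
         simp [Matrix.mul_apply, Matrix.transpose, Matrix.of_apply, Fin.sum_univ_succ,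
           Matrix.vecMul, dotProduct, Matrix.vecHead, Matrix.vecTail])

lemma key12 {μ : Measure M3} (hμ : IsHaarSO3 μ) (s : Fin 3 → ℝ) :
    (0 < s 1 + s 2 → 0 < dS μ s 1 + dS μ s 2) ∧
    (s 1 + s 2 = 0 → dS μ s 1 + dS μ s 2 = 0) := by
  refine master hμ s 1 2 0 ?_ ?_
    (D := !![(1:ℝ),0,0;0,-1,0;0,0,-1]) (U := !![(-1:ℝ),0,0;0,0,1;0,1,0])
    (R1 := !![(-1:ℝ),0,0;0,-1,0;0,0,1]) (R2 := !![(1:ℝ),0,0;0,0,1;0,-1,0])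
    (R3 := !![(-1:ℝ),0,0;0,0,1;0,1,0]) (R4 := !![(0:ℝ),-1,0;1,0,0;0,0,1])
    ?_ ?_ ?_ ?_ ?_ ?_ ?_ ?_ ?_ ?_ ?_ ?_
  · intro Q; rw [trace_diag]; ring
  · intro Q hQ; linarith [col_norm hQ 1]
  all_goals first
    | (show _ ∧ _
       constructor
       · ext i j
         fin_cases i <;> fin_cases j <;>
           simp [Matrix.mul_apply, Fin.sum_univ_succ, Matrix.one_apply]
       · simp [Matrix.det_fin_three])
    | (intro Q
       refine ⟨?_, ?_, ?_⟩ <;>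
         simp [Matrix.mul_apply, Matrix.transpose, Matrix.of_apply, Fin.sum_univ_succ,
           Matrix.vecMul, dotProduct, Matrix.vecHead, Matrix.vecTail])
    | (intro Q
       refine ⟨?_, ?_⟩ <;>
         simp [Matrix.mul_apply, Matrix.transpose, Matrix.of_apply, Fin.sum_univ_succ,
           Matrix.vecMul, dotProduct, Matrix.vecHead, Matrix.vecTail])

lemma key02 {μ : Measure M3} (hμ : IsHaarSO3 μ) (s : Fin 3 → ℝ) :
    (0 < s 0 + s 2 → 0 < dS μ s 0 + dS μ s 2) ∧
    (s 0 + s 2 = 0 → dS μ s 0 + dS μ s 2 = 0) := by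
  refine master hμ s 0 2 1 ?_ ?_
    (D := !![(-1:ℝ),0,0;0,1,0;0,0,-1]) (U := !![(0:ℝ),0,1;0,-1,0;1,0,0])
    (R1 := !![(-1:ℝ),0,0;0,-1,0;0,0,1]) (R2 := !![(0:ℝ),0,1;0,1,0;-1,0,0])
    (R3 := !![(0:ℝ),0,1;0,-1,0;1,0,0]) (R4 := !![(0:ℝ),1,0;-1,0,0;0,0,1])
    ?_ ?_ ?_ ?_ ?_ ?_ ?_ ?_ ?_ ?_ ?_ ?_
  · intro Q; rw [trace_diag]; ring
  · intro Q hQ; linarith [col_norm hQ 0]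
  all_goals first
    | (show _ ∧ _
       constructor
       · ext i j
         fin_cases i <;> fin_cases j <;>
           simp [Matrix.mul_apply, Fin.sum_univ_succ, Matrix.one_apply]
       · simp [Matrix.det_fin_three])
    | (intro Q
       refine ⟨?_, ?_, ?_⟩ <;>
         simp [Matrix.mul_apply, Matrix.transpose, Matrix.of_apply, Fin.sum_univ_succ,
           Matrix.vecMul, dotProduct, Matrix.vecHead, Matrix.vecTail])
    | (intro Q
       refine ⟨?_, ?_⟩ <;>
         simp [Matrix.mul_apply, Matrix.transpose, Matrix.of_apply, Fin.sum_univ_succ,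
           Matrix.vecMul, dotProduct, Matrix.vecHead, Matrix.vecTail])

lemma posdef_char (v : Fin 3 → ℝ) :
    ((Matrix.diagonal v).trace • (1 : M3) - Matrix.diagonal v).PosDef ↔
      ∀ i j : Fin 3, i ≠ j → 0 < v i + v j := by
  have heq : (Matrix.diagonal v).trace • (1 : M3) - Matrix.diagonal v
      = Matrix.diagonal (fun l => (v 0 + v 1 + v 2) - v l) := by
    rw [Matrix.smul_one_eq_diagonal, ← Matrix.diagonal_sub]
    congr 1
    funext l
    simp [Matrix.trace_diagonal, Fin.sum_univ_three]
  rw [heq, Matrix.posDef_diagonal_iff]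
  constructor
  · intro h i j hij
    have h0 := h 0
    have h1 := h 1
    have h2 := h 2
    fin_cases i <;> fin_cases j
    · exact absurd rfl hij
    · show 0 < v 0 + v 1; linarith
    · show 0 < v 0 + v 2; linarith
    · show 0 < v 1 + v 0; linarith
    · exact absurd rfl hij
    · show 0 < v 1 + v 2; linarith
    · show 0 < v 2 + v 0; linarith
    · show 0 < v 2 + v 1; linarith
    · exact absurd rfl hij
  · intro h l
    have h01 := h 0 1 (by decide)
    have h02 := h 0 2 (by decide)
    have h12 := h 1 2 (by decide)
    fin_cases l
    · show 0 < v 0 + v 1 + v 2 - v 0; linarith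
    · show 0 < v 0 + v 1 + v 2 - v 1; linarith
    · show 0 < v 0 + v 1 + v 2 - v 2; linarith


/-- **Equivalence of observability criteria.** Let `S = diag s` with
`s₁ ≥ s₂ ≥ |s₃| ≥ 0` and let `D = diag (d₁(S), d₂(S), d₃(S))` collect the diagonal
entries of the first moment of `M(S)`. Then `tr(D)·I − D` is positive definite iff
`tr(S)·I − S` is positive definite; equivalently, `dᵢ + dⱼ > 0` for all `i ≠ j` iff
`sᵢ + sⱼ > 0` for all `i ≠ j`. -/
theorem observability_criteria_equiv (μ : Measure M3) (hμ : IsHaarSO3 μ)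
    (s : Fin 3 → ℝ) (h1 : s 1 ≤ s 0) (h2 : |s 2| ≤ s 1) :
    (((Matrix.diagonal (fun i => dS μ s i)).trace • (1 : M3)
          - Matrix.diagonal (fun i => dS μ s i)).PosDef ↔
        ((Matrix.diagonal s).trace • (1 : M3) - Matrix.diagonal s).PosDef) ∧
    ((∀ i j : Fin 3, i ≠ j → 0 < dS μ s i + dS μ s j) ↔
        (∀ i j : Fin 3, i ≠ j → 0 < s i + s j)) := by
  have k01 := key01 hμ s
  have k12 := key12 hμ s
  have k02 := key02 hμ s
  have habs := abs_le.mp h2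
  have habs0 := abs_nonneg (s 2)
  have keyP : ∀ i j : Fin 3, i ≠ j →
      ((0 < s i + s j → 0 < dS μ s i + dS μ s j) ∧
       (s i + s j = 0 → dS μ s i + dS μ s j = 0)) := by
    intro i j hij
    fin_cases i <;> fin_cases j
    · exact absurd rfl hij
    · exact k01
    · exact k02
    · show (0 < s 1 + s 0 → 0 < dS μ s 1 + dS μ s 0) ∧
        (s 1 + s 0 = 0 → dS μ s 1 + dS μ s 0 = 0)
      exact ⟨fun h => by have := k01.1 (by linarith); linarith,
        fun h => by have := k01.2 (by linarith); linarith⟩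
    · exact absurd rfl hij
    · exact k12
    · show (0 < s 2 + s 0 → 0 < dS μ s 2 + dS μ s 0) ∧
        (s 2 + s 0 = 0 → dS μ s 2 + dS μ s 0 = 0)
      exact ⟨fun h => by have := k02.1 (by linarith); linarith,
        fun h => by have := k02.2 (by linarith); linarith⟩
    · show (0 < s 2 + s 1 → 0 < dS μ s 2 + dS μ s 1) ∧
        (s 2 + s 1 = 0 → dS μ s 2 + dS μ s 1 = 0)
      exact ⟨fun h => by have := k12.1 (by linarith); linarith,
        fun h => by have := k12.2 (by linarith); linarith⟩
    · exact absurd rfl hij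
  have hnn : ∀ i j : Fin 3, i ≠ j → 0 ≤ s i + s j := by
    intro i j hij
    fin_cases i <;> fin_cases j
    · exact absurd rfl hij
    · show (0:ℝ) ≤ s 0 + s 1; linarith
    · show (0:ℝ) ≤ s 0 + s 2; linarith
    · show (0:ℝ) ≤ s 1 + s 0; linarith
    · exact absurd rfl hij
    · show (0:ℝ) ≤ s 1 + s 2; linarith
    · show (0:ℝ) ≤ s 2 + s 0; linarith
    · show (0:ℝ) ≤ s 2 + s 1; linarith
    · exact absurd rfl hij
  have iff2 : (∀ i j : Fin 3, i ≠ j → 0 < dS μ s i + dS μ s j) ↔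
      (∀ i j : Fin 3, i ≠ j → 0 < s i + s j) := by
    constructor
    · intro hd i j hij
      rcases (hnn i j hij).lt_or_eq with h | h
      · exact h
      · exfalso
        have hz := (keyP i j hij).2 h.symm
        have := hd i j hij
        linarith
    · intro hs i j hij
      exact (keyP i j hij).1 (hs i j hij)
  refine ⟨((posdef_char fun i => dS μ s i).trans ?_).trans (posdef_char s).symm, iff2⟩
  exact iff2
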